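/- Let A(z) = −8/(1−z²)² for z in the open unit disc 𝔻. For each k > 0, the function f_k(z) = (1−z²)^{1/2} [ ((1−z)/(1+z))^{3/2} + k ((1−z)/(1+z))^{−3/2} ] (principal branches; note (1−z)/(1+z) lies in the right half-plane and 1−z² has positive real part for z ∈ 𝔻) is a non-trivial solution of f'' + A f = 0; its zeros in 𝔻 are exactly the two points z₁ = (1 − k^{1/3} e^{iπ/3})/(1 + k^{1/3} e^{iπ/3}) and z₂ = (1 − k^{1/3} e^{−iπ/3})/(1 + k^{1/3} e^{−iπ/3}), and z₁, z₂ → 1 as k → 0⁺. Consequently, for each δ > 0 there exists a non-trivial solution of f'' + A f = 0 having two distinct zeros in D(1,δ) ∩ 𝔻, even though |A(x)|(1−x²)² = 8 > 3 for all x ∈ (0,1). -/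

import Mathlib

open Complex Metric Filter Topology
open scoped Real

/-- The coefficient `A(z) = −8/(1−z²)²`. -/
noncomputable def A15 (z : ℂ) : ℂ := -8 / (1 - z ^ 2) ^ 2

/-- The solution `f_k(z) = (1−z²)^{1/2} [((1−z)/(1+z))^{3/2} + k ((1−z)/(1+z))^{−3/2}]`
(principal branches). -/
noncomputable def f15 (k : ℝ) (z : ℂ) : ℂ :=
  (1 - z ^ 2) ^ ((1 : ℂ) / 2) *
    (((1 - z) / (1 + z)) ^ ((3 : ℂ) / 2) +
      (k : ℂ) * ((1 - z) / (1 + z)) ^ (-((3 : ℂ) / 2)))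

/-- The zeros `z₁(k)` and `z₂(k)`. -/
noncomputable def z15₁ (k : ℝ) : ℂ :=
  (1 - (k ^ ((1:ℝ)/3) : ℝ) * Complex.exp ((π / 3 : ℝ) * Complex.I)) /
    (1 + (k ^ ((1:ℝ)/3) : ℝ) * Complex.exp ((π / 3 : ℝ) * Complex.I))

noncomputable def z15₂ (k : ℝ) : ℂ :=
  (1 - (k ^ ((1:ℝ)/3) : ℝ) * Complex.exp (-(π / 3 : ℝ) * Complex.I)) /
    (1 + (k ^ ((1:ℝ)/3) : ℝ) * Complex.exp (-(π / 3 : ℝ) * Complex.I))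

/-! ### Auxiliary lemmas -/

lemma stmt15_mul_cpow_re_pos {a b : ℂ} (ha : 0 < a.re) (hb : 0 < b.re) (s : ℂ) :
    (a * b) ^ s = a ^ s * b ^ s := by
  have ha0 : a ≠ 0 := fun h => by simp [h] at ha
  have hb0 : b ≠ 0 := fun h => by simp [h] at hb
  have h1 : |a.arg| < π / 2 := Complex.abs_arg_lt_pi_div_two_iff.2 (Or.inl ha)
  have h2 : |b.arg| < π / 2 := Complex.abs_arg_lt_pi_div_two_iff.2 (Or.inl hb)
  rw [abs_lt] at h1 h2
  have hargs : a.arg + b.arg ∈ Set.Ioc (-π) π := ⟨by linarith, by linarith⟩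
  rw [Complex.cpow_def_of_ne_zero (mul_ne_zero ha0 hb0), Complex.cpow_def_of_ne_zero ha0,
    Complex.cpow_def_of_ne_zero hb0, Complex.log_mul ha0 hb0 hargs, add_mul, Complex.exp_add]

lemma stmt15_div_cpow_re_pos {a b : ℂ} (ha : 0 < a.re) (hb : 0 < b.re) (s : ℂ) :
    (a / b) ^ s = a ^ s * b ^ (-s) := by
  have hb0 : b ≠ 0 := fun h => by simp [h] at hb
  have hbinv : 0 < (b⁻¹).re := by
    rw [Complex.inv_re]
    exact div_pos hb (Complex.normSq_pos.2 hb0)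
  have harg : b.arg ≠ π := by
    have h2 : |b.arg| < π / 2 := Complex.abs_arg_lt_pi_div_two_iff.2 (Or.inl hb)
    intro h; rw [h, abs_of_pos Real.pi_pos] at h2; linarith [Real.pi_pos]
  rw [div_eq_mul_inv, stmt15_mul_cpow_re_pos ha hbinv s, Complex.inv_cpow _ _ harg,
    ← Complex.cpow_neg]

/-- The rational form of `f15`. -/
noncomputable def g15 (k : ℝ) (z : ℂ) : ℂ := (1-z)^2/(1+z) + (k:ℂ)*((1+z)^2/(1-z))
noncomputable def g15' (k : ℝ) (z : ℂ) : ℂ := (1 - 4/(1+z)^2) + (k:ℂ)*(4/(1-z)^2 - 1)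
noncomputable def g15'' (k : ℝ) (z : ℂ) : ℂ := 8/(1+z)^3 + (k:ℂ)*(8/(1-z)^3)

lemma stmt15_pair_cpow {c : ℂ} (hc : c ≠ 0) :
    c ^ ((1:ℂ)/2) * c ^ ((3:ℂ)/2) = c ^ 2 ∧ c ^ ((1:ℂ)/2) * c ^ (-((3:ℂ)/2)) = c⁻¹ := by
  constructor
  · rw [← Complex.cpow_add _ _ hc]; norm_num
  · rw [← Complex.cpow_add _ _ hc]
    norm_num [Complex.cpow_neg_one]

lemma stmt15_f15_eq (k : ℝ) {z : ℂ} (ha : 0 < (1-z).re) (hb : 0 < (1+z).re) :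
    f15 k z = g15 k z := by
  have ha0 : (1:ℂ) - z ≠ 0 := fun h => by simp [h] at ha
  have hb0 : (1:ℂ) + z ≠ 0 := fun h => by simp [h] at hb
  have hab : (1:ℂ) - z ^ 2 = (1-z) * (1+z) := by ring
  obtain ⟨h1, h3⟩ := stmt15_pair_cpow ha0
  obtain ⟨h4, h2⟩ := stmt15_pair_cpow hb0
  rw [f15, g15, hab, stmt15_mul_cpow_re_pos ha hb, stmt15_div_cpow_re_pos ha hb,
    stmt15_div_cpow_re_pos ha hb, neg_neg]
  have e1 : (1-z)^((1:ℂ)/2) * (1+z)^((1:ℂ)/2) *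
      ((1-z)^((3:ℂ)/2) * (1+z)^(-((3:ℂ)/2)) + ↑k * ((1-z)^(-((3:ℂ)/2)) * (1+z)^((3:ℂ)/2))) =
      ((1-z)^((1:ℂ)/2) * (1-z)^((3:ℂ)/2)) * ((1+z)^((1:ℂ)/2) * (1+z)^(-((3:ℂ)/2))) +
      ↑k * (((1-z)^((1:ℂ)/2) * (1-z)^(-((3:ℂ)/2))) * ((1+z)^((1:ℂ)/2) * (1+z)^((3:ℂ)/2))) := by
    ring
  rw [e1, h1, h2, h3, h4]
  field_simp

lemma stmt15_ball_re {z : ℂ} (hz : z ∈ ball (0:ℂ) 1) : 0 < (1-z).re ∧ 0 < (1+z).re := by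
  rw [mem_ball_zero_iff] at hz
  have h1 : |z.re| ≤ ‖z‖ := Complex.abs_re_le_norm z
  have h2 : |z.re| < 1 := lt_of_le_of_lt h1 hz
  rw [abs_lt] at h2
  constructor <;> simp [Complex.sub_re, Complex.add_re] <;> linarith

lemma stmt15_hasDerivAt_g15 (k : ℝ) {z : ℂ} (ha0 : (1:ℂ) - z ≠ 0) (hb0 : (1:ℂ) + z ≠ 0) :
    HasDerivAt (g15 k) (g15' k z) z := by
  have H1 : HasDerivAt (fun z : ℂ => 1 - z) (-1) z := (hasDerivAt_id z).const_sub 1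
  have H3 : HasDerivAt (fun z : ℂ => 1 + z) (1 : ℂ) z := by
    simpa using (hasDerivAt_id z).const_add 1
  have Ha : HasDerivAt (fun z : ℂ => (1-z)^2/(1+z))
      (((↑2*(1-z)^1*(-1)) * (1+z) - (1-z)^2 * 1)/(1+z)^2) z := (H1.pow 2).div H3 hb0
  have Hb : HasDerivAt (fun z : ℂ => (k:ℂ) * ((1+z)^2/(1-z)))
      ((k:ℂ) * (((↑2*(1+z)^1*1) * (1-z) - (1+z)^2 * (-1))/(1-z)^2)) z :=
    ((H3.pow 2).div H1 ha0).const_mul _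
  have := Ha.add Hb
  refine (this : HasDerivAt (g15 k) _ z).congr_deriv ?_
  rw [g15']
  field_simp
  ring

lemma stmt15_hasDerivAt_g15' (k : ℝ) {z : ℂ} (ha0 : (1:ℂ) - z ≠ 0) (hb0 : (1:ℂ) + z ≠ 0) :
    HasDerivAt (g15' k) (g15'' k z) z := by
  have H1 : HasDerivAt (fun z : ℂ => 1 - z) (-1) z := (hasDerivAt_id z).const_sub 1
  have H3 : HasDerivAt (fun z : ℂ => 1 + z) (1 : ℂ) z := by
    simpa using (hasDerivAt_id z).const_add 1
  have Ha : HasDerivAt (fun z : ℂ => 4/(1+z)^2)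
      ((0 * (1+z)^2 - 4 * (↑2*(1+z)^1*1))/((1+z)^2)^2) z :=
    (hasDerivAt_const z 4).div (H3.pow 2) (pow_ne_zero 2 hb0)
  have Hb : HasDerivAt (fun z : ℂ => 4/(1-z)^2)
      ((0 * (1-z)^2 - 4 * (↑2*(1-z)^1*(-1)))/((1-z)^2)^2) z :=
    (hasDerivAt_const z 4).div (H1.pow 2) (pow_ne_zero 2 ha0)
  have := ((Ha.const_sub 1).add ((Hb.sub_const 1).const_mul (k:ℂ)))
  refine (this : HasDerivAt (g15' k) _ z).congr_deriv ?_
  rw [g15'']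
  field_simp
  ring

lemma stmt15_ode_g15 (k : ℝ) {z : ℂ} (ha0 : (1:ℂ) - z ≠ 0) (hb0 : (1:ℂ) + z ≠ 0) :
    g15'' k z + A15 z * g15 k z = 0 := by
  have hab : (1:ℂ) - z ^ 2 = (1-z) * (1+z) := by ring
  rw [g15'', g15, A15, hab]
  field_simp
  ring

lemma stmt15_exp_pi3 : Complex.exp ((π / 3 : ℝ) * Complex.I)
    = (1/2 : ℂ) + (Real.sqrt 3 / 2 : ℝ) * Complex.I := by
  rw [Complex.exp_mul_I, ← Complex.ofReal_cos, ← Complex.ofReal_sin,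
    Real.cos_pi_div_three, Real.sin_pi_div_three]
  push_cast
  ring

lemma stmt15_exp_neg_pi3 : Complex.exp (-(π / 3 : ℝ) * Complex.I)
    = (1/2 : ℂ) - (Real.sqrt 3 / 2 : ℝ) * Complex.I := by
  rw [show (-(π / 3 : ℝ) : ℂ) = ((-(π/3) : ℝ) : ℂ) by push_cast; ring,
    Complex.exp_mul_I, ← Complex.ofReal_cos, ← Complex.ofReal_sin,
    Real.cos_neg, Real.sin_neg, Real.cos_pi_div_three, Real.sin_pi_div_three]
  push_cast
  ring

lemma stmt15_cubic_factor {a b : ℂ} (r : ℝ) :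
    a^3 + ((r:ℂ))^3 * b^3 =
      (a - ↑r * ((1/2 : ℂ) + (Real.sqrt 3 / 2 : ℝ) * Complex.I) * b) *
      (a - ↑r * ((1/2 : ℂ) - (Real.sqrt 3 / 2 : ℝ) * Complex.I) * b) *
      (a + ↑r * b) := by
  have hs : ((Real.sqrt 3 : ℝ) : ℂ)^2 = 3 := by
    rw [← Complex.ofReal_pow, Real.sq_sqrt (by norm_num : (3:ℝ) ≥ 0)]
    norm_num
  have hI : Complex.I ^ 2 = -1 := Complex.I_sq
  push_cast
  linear_combination ((Real.sqrt 3 : ℝ) : ℂ)^2 * ((r:ℂ)^2*b^2*(a + (r:ℂ)*b)/4) * hI -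
    ((r:ℂ)^2*b^2*(a + (r:ℂ)*b)/4) * hs

lemma stmt15_lin_zero_iff {c z : ℂ} (hc : (1:ℂ) + c ≠ 0) :
    (1 - z) - c * (1 + z) = 0 ↔ z = (1 - c)/(1 + c) := by
  rw [eq_div_iff hc]
  constructor <;> intro h <;> linear_combination -h

lemma stmt15_moebius_mem_ball {c : ℂ} (hc : 0 < c.re) : (1 - c)/(1 + c) ∈ ball (0:ℂ) 1 := by
  have h1 : ‖1 - c‖ < ‖1 + c‖ := by
    have h2 : ‖1 - c‖ ^ 2 < ‖1 + c‖ ^ 2 := by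
      rw [Complex.sq_norm, Complex.sq_norm, Complex.normSq_apply, Complex.normSq_apply]
      simp only [Complex.sub_re, Complex.sub_im, Complex.add_re, Complex.add_im,
        Complex.one_re, Complex.one_im]
      nlinarith [sq_nonneg c.im]
    exact lt_of_pow_lt_pow_left₀ 2 (norm_nonneg _) h2
  rw [mem_ball_zero_iff, norm_div, div_lt_one]
  · exact h1
  · exact lt_of_le_of_lt (norm_nonneg _) h1

lemma stmt15_tendsto_root :
    Filter.Tendsto (fun k : ℝ => k ^ ((1:ℝ)/3)) (𝓝[>] 0) (𝓝 0) := by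
  have h : ContinuousAt (fun k : ℝ => k ^ ((1:ℝ)/3)) 0 :=
    Real.continuousAt_rpow_const 0 _ (Or.inr (by norm_num))
  have h2 : Filter.Tendsto (fun k : ℝ => k ^ ((1:ℝ)/3)) (𝓝[>] 0) (𝓝 ((0:ℝ) ^ ((1:ℝ)/3))) :=
    h.tendsto.mono_left nhdsWithin_le_nhds
  simpa [Real.zero_rpow (show ((1:ℝ)/3) ≠ 0 by norm_num)] using h2

lemma stmt15_tendsto_moebius (e : ℂ) :
    Filter.Tendsto (fun r : ℝ => (1 - (r:ℂ)*e)/(1 + (r:ℂ)*e)) (𝓝 0) (𝓝 1) := by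
  have hc : ContinuousAt (fun r : ℝ => (1 - (r:ℂ)*e)/(1 + (r:ℂ)*e)) 0 := by
    apply ContinuousAt.div
    · fun_prop
    · fun_prop
    · simp
  simpa using hc.tendsto

lemma stmt15_analyticAt_g15 (k : ℝ) {z : ℂ} (ha0 : (1:ℂ) - z ≠ 0) (hb0 : (1:ℂ) + z ≠ 0) :
    AnalyticAt ℂ (g15 k) z := by
  have h1 : AnalyticAt ℂ (fun z : ℂ => 1 - z) z := analyticAt_const.sub (analyticAt_id)
  have h2 : AnalyticAt ℂ (fun z : ℂ => 1 + z) z := analyticAt_const.add (analyticAt_id)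
  exact ((h1.pow 2).div h2 hb0).add (analyticAt_const.mul ((h2.pow 2).div h1 ha0))

lemma stmt15_rcube (k : ℝ) (hk : 0 < k) : (k ^ ((1:ℝ)/3)) ^ 3 = k := by
  rw [← Real.rpow_natCast (k ^ ((1:ℝ)/3)) 3, ← Real.rpow_mul hk.le]
  norm_num

lemma stmt15_hz1_eq (k : ℝ) : z15₁ k
    = (1 - ((k ^ ((1:ℝ)/3) : ℝ) : ℂ) * ((1/2 : ℂ) + (Real.sqrt 3 / 2 : ℝ) * Complex.I)) /
      (1 + ((k ^ ((1:ℝ)/3) : ℝ) : ℂ) * ((1/2 : ℂ) + (Real.sqrt 3 / 2 : ℝ) * Complex.I)) := by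
  unfold z15₁; rw [stmt15_exp_pi3]

lemma stmt15_hz2_eq (k : ℝ) : z15₂ k
    = (1 - ((k ^ ((1:ℝ)/3) : ℝ) : ℂ) * ((1/2 : ℂ) - (Real.sqrt 3 / 2 : ℝ) * Complex.I)) /
      (1 + ((k ^ ((1:ℝ)/3) : ℝ) : ℂ) * ((1/2 : ℂ) - (Real.sqrt 3 / 2 : ℝ) * Complex.I)) := by
  unfold z15₂; rw [stmt15_exp_neg_pi3]

lemma stmt15_pts (k : ℝ) (hk : 0 < k) :
    z15₁ k ∈ ball (0:ℂ) 1 ∧ z15₂ k ∈ ball (0:ℂ) 1 ∧ z15₁ k ≠ z15₂ k := by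
  have hr : 0 < k ^ ((1:ℝ)/3) := Real.rpow_pos_of_pos hk _
  set r : ℝ := k ^ ((1:ℝ)/3)
  have hs : 0 < Real.sqrt 3 := Real.sqrt_pos.2 (by norm_num)
  set E₁ : ℂ := (1/2 : ℂ) + (Real.sqrt 3 / 2 : ℝ) * Complex.I with hE1
  set E₂ : ℂ := (1/2 : ℂ) - (Real.sqrt 3 / 2 : ℝ) * Complex.I with hE2
  have hre1 : ((r:ℂ) * E₁).re = r/2 := by
    rw [Complex.re_ofReal_mul, hE1]; simp; ring
  have hre2 : ((r:ℂ) * E₂).re = r/2 := by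
    rw [Complex.re_ofReal_mul, hE2]; simp; ring
  have him1 : ((r:ℂ) * E₁).im = r * (Real.sqrt 3 / 2) := by
    rw [Complex.im_ofReal_mul, hE1]; simp
  have him2 : ((r:ℂ) * E₂).im = -(r * (Real.sqrt 3 / 2)) := by
    rw [Complex.im_ofReal_mul, hE2]; simp
  refine ⟨?_, ?_, ?_⟩
  · rw [stmt15_hz1_eq]; exact stmt15_moebius_mem_ball (by rw [hre1]; linarith)
  · rw [stmt15_hz2_eq]; exact stmt15_moebius_mem_ball (by rw [hre2]; linarith)
  · rw [stmt15_hz1_eq, stmt15_hz2_eq]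
    intro h
    have hc1 : (1:ℂ) + (r:ℂ) * E₁ ≠ 0 := by
      intro h0
      have := congrArg Complex.re h0
      simp only [Complex.add_re, Complex.one_re, hre1, Complex.zero_re] at this
      linarith
    have hc2 : (1:ℂ) + (r:ℂ) * E₂ ≠ 0 := by
      intro h0
      have := congrArg Complex.re h0
      simp only [Complex.add_re, Complex.one_re, hre2, Complex.zero_re] at this
      linarith
    rw [div_eq_div_iff hc1 hc2] at h
    have hce : (r:ℂ) * E₁ = (r:ℂ) * E₂ := by linear_combination -h/2
    have := congrArg Complex.im hce
    rw [him1, him2] at this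
    nlinarith

lemma stmt15_zero_iff (k : ℝ) (hk : 0 < k) {z : ℂ} (hz : z ∈ ball (0:ℂ) 1) :
    f15 k z = 0 ↔ z = z15₁ k ∨ z = z15₂ k := by
  obtain ⟨ha, hb⟩ := stmt15_ball_re hz
  have ha0 : (1:ℂ) - z ≠ 0 := fun h => by simp [h] at ha
  have hb0 : (1:ℂ) + z ≠ 0 := fun h => by simp [h] at hb
  have hr : 0 < k ^ ((1:ℝ)/3) := Real.rpow_pos_of_pos hk _
  set r : ℝ := k ^ ((1:ℝ)/3)
  have hs : 0 < Real.sqrt 3 := Real.sqrt_pos.2 (by norm_num)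
  have hk3 : (k:ℂ) = ((r:ℂ))^3 := by
    have := stmt15_rcube k hk
    exact_mod_cast congrArg Complex.ofReal this.symm
  have key : f15 k z = ((1-z)^3 + (k:ℂ)*(1+z)^3)/((1-z)*(1+z)) := by
    rw [stmt15_f15_eq k ha hb, g15]; field_simp
  have hd : (1-z)*(1+z) ≠ 0 := mul_ne_zero ha0 hb0
  rw [key, div_eq_zero_iff]
  simp only [hd, or_false]
  rw [hk3, stmt15_cubic_factor r]
  set E₁ : ℂ := (1/2 : ℂ) + (Real.sqrt 3 / 2 : ℝ) * Complex.I with hE1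
  set E₂ : ℂ := (1/2 : ℂ) - (Real.sqrt 3 / 2 : ℝ) * Complex.I with hE2
  have hre1 : ((r:ℂ) * E₁).re = r/2 := by rw [Complex.re_ofReal_mul, hE1]; simp; ring
  have hre2 : ((r:ℂ) * E₂).re = r/2 := by rw [Complex.re_ofReal_mul, hE2]; simp; ring
  have hc1 : (1:ℂ) + (r:ℂ) * E₁ ≠ 0 := by
    intro h0
    have := congrArg Complex.re h0
    simp only [Complex.add_re, Complex.one_re, hre1, Complex.zero_re] at this
    linarith
  have hc2 : (1:ℂ) + (r:ℂ) * E₂ ≠ 0 := by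
    intro h0
    have := congrArg Complex.re h0
    simp only [Complex.add_re, Complex.one_re, hre2, Complex.zero_re] at this
    linarith
  have h3 : (1-z) + (r:ℂ)*(1+z) ≠ 0 := by
    intro h0
    have := congrArg Complex.re h0
    simp only [Complex.add_re, Complex.re_ofReal_mul, Complex.zero_re, Complex.one_re] at this
    have hb' : 0 < 1 + z.re := by simpa [Complex.add_re] using hb
    nlinarith [mul_pos hr hb']
  rw [mul_eq_zero, mul_eq_zero]
  rw [stmt15_lin_zero_iff hc1, stmt15_lin_zero_iff hc2, ← stmt15_hz1_eq, ← stmt15_hz2_eq]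
  simp only [h3, or_false]

lemma stmt15_main (k : ℝ) (hk : 0 < k) :
    AnalyticOnNhd ℂ (f15 k) (ball (0:ℂ) 1) ∧
    (∀ z ∈ ball (0:ℂ) 1, deriv (deriv (f15 k)) z + A15 z * f15 k z = 0) ∧
    ¬ (∀ z ∈ ball (0:ℂ) 1, f15 k z = 0) ∧
    z15₁ k ∈ ball (0:ℂ) 1 ∧ z15₂ k ∈ ball (0:ℂ) 1 ∧ z15₁ k ≠ z15₂ k ∧
    (∀ z ∈ ball (0:ℂ) 1, (f15 k z = 0 ↔ z = z15₁ k ∨ z = z15₂ k)) := by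
  have hEqOn : Set.EqOn (f15 k) (g15 k) (ball (0:ℂ) 1) := fun w hw =>
    stmt15_f15_eq k (stmt15_ball_re hw).1 (stmt15_ball_re hw).2
  have hne : ∀ w ∈ ball (0:ℂ) 1, (1:ℂ) - w ≠ 0 ∧ (1:ℂ) + w ≠ 0 := by
    intro w hw
    obtain ⟨ha, hb⟩ := stmt15_ball_re hw
    exact ⟨fun h => by simp [h] at ha, fun h => by simp [h] at hb⟩
  have hfg : ∀ z ∈ ball (0:ℂ) 1, f15 k =ᶠ[𝓝 z] g15 k := fun z hz =>
    Filter.eventuallyEq_of_mem (isOpen_ball.mem_nhds hz) hEqOn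
  have hd1 : Set.EqOn (deriv (f15 k)) (g15' k) (ball (0:ℂ) 1) := by
    intro z hz
    obtain ⟨ha0, hb0⟩ := hne z hz
    rw [(hfg z hz).deriv_eq]
    exact (stmt15_hasDerivAt_g15 k ha0 hb0).deriv
  obtain ⟨h1, h2, h3⟩ := stmt15_pts k hk
  refine ⟨?_, ?_, ?_, h1, h2, h3, fun z hz => stmt15_zero_iff k hk hz⟩
  · intro z hz
    obtain ⟨ha0, hb0⟩ := hne z hz
    exact (stmt15_analyticAt_g15 k ha0 hb0).congr (hfg z hz).symm
  · intro z hz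
    obtain ⟨ha0, hb0⟩ := hne z hz
    have hD2 : deriv (deriv (f15 k)) z = g15'' k z := by
      rw [(Filter.eventuallyEq_of_mem (isOpen_ball.mem_nhds hz) hd1).deriv_eq]
      exact (stmt15_hasDerivAt_g15' k ha0 hb0).deriv
    rw [hD2, hEqOn hz]
    exact stmt15_ode_g15 k ha0 hb0
  · intro hall
    have h0 : (0:ℂ) ∈ ball (0:ℂ) 1 := by simp
    have := hall 0 h0
    rw [hEqOn h0, g15] at this
    norm_num at this
    have : (1:ℝ) + k = 0 := by exact_mod_cast this
    linarith

lemma stmt15_tendsto₁ : Filter.Tendsto z15₁ (𝓝[>] (0:ℝ)) (𝓝 1) := by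
  have : z15₁ = (fun r : ℝ => (1 - (r:ℂ) * Complex.exp ((π / 3 : ℝ) * Complex.I)) /
      (1 + (r:ℂ) * Complex.exp ((π / 3 : ℝ) * Complex.I))) ∘ (fun k => k ^ ((1:ℝ)/3)) := rfl
  rw [this]
  exact (stmt15_tendsto_moebius _).comp stmt15_tendsto_root

lemma stmt15_tendsto₂ : Filter.Tendsto z15₂ (𝓝[>] (0:ℝ)) (𝓝 1) := by
  have : z15₂ = (fun r : ℝ => (1 - (r:ℂ) * Complex.exp (-(π / 3 : ℝ) * Complex.I)) /
      (1 + (r:ℂ) * Complex.exp (-(π / 3 : ℝ) * Complex.I))) ∘ (fun k => k ^ ((1:ℝ)/3)) := rfl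
  rw [this]
  exact (stmt15_tendsto_moebius _).comp stmt15_tendsto_root

theorem stmt_15 :
    (∀ k : ℝ, 0 < k →
      AnalyticOnNhd ℂ (f15 k) (ball (0:ℂ) 1) ∧
      (∀ z ∈ ball (0:ℂ) 1, deriv (deriv (f15 k)) z + A15 z * f15 k z = 0) ∧
      ¬ (∀ z ∈ ball (0:ℂ) 1, f15 k z = 0) ∧
      z15₁ k ∈ ball (0:ℂ) 1 ∧ z15₂ k ∈ ball (0:ℂ) 1 ∧ z15₁ k ≠ z15₂ k ∧
      (∀ z ∈ ball (0:ℂ) 1, (f15 k z = 0 ↔ z = z15₁ k ∨ z = z15₂ k))) ∧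
    Tendsto z15₁ (𝓝[>] (0:ℝ)) (𝓝 1) ∧ Tendsto z15₂ (𝓝[>] (0:ℝ)) (𝓝 1) ∧
    (∀ δ : ℝ, 0 < δ → ∃ f : ℂ → ℂ,
      AnalyticOnNhd ℂ f (ball (0:ℂ) 1) ∧
      (∀ z ∈ ball (0:ℂ) 1, deriv (deriv f) z + A15 z * f z = 0) ∧
      ¬ (∀ z ∈ ball (0:ℂ) 1, f z = 0) ∧
      ∃ z₁ ∈ ball (1:ℂ) δ ∩ ball (0:ℂ) 1, ∃ z₂ ∈ ball (1:ℂ) δ ∩ ball (0:ℂ) 1,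
        z₁ ≠ z₂ ∧ f z₁ = 0 ∧ f z₂ = 0) ∧
    (∀ x : ℝ, x ∈ Set.Ioo (0:ℝ) 1 →
      ‖A15 (x : ℂ)‖ * (1 - x ^ 2) ^ 2 = 8) := by
  refine ⟨fun k hk => stmt15_main k hk, stmt15_tendsto₁, stmt15_tendsto₂, ?_, ?_⟩
  · intro δ hδ
    have hb1 : ∀ᶠ k in 𝓝[>] (0:ℝ), z15₁ k ∈ ball (1:ℂ) δ :=
      stmt15_tendsto₁ (ball_mem_nhds (1:ℂ) hδ)
    have hb2 : ∀ᶠ k in 𝓝[>] (0:ℝ), z15₂ k ∈ ball (1:ℂ) δ :=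
      stmt15_tendsto₂ (ball_mem_nhds (1:ℂ) hδ)
    have h0 : ∀ᶠ k in 𝓝[>] (0:ℝ), 0 < k := eventually_mem_nhdsWithin
    obtain ⟨k, hk0, hk1, hk2⟩ := (h0.and (hb1.and hb2)).exists
    obtain ⟨hA, hODE, hNT, hm1, hm2, hne, hiff⟩ := stmt15_main k hk0
    exact ⟨f15 k, hA, hODE, hNT, z15₁ k, ⟨hk1, hm1⟩, z15₂ k, ⟨hk2, hm2⟩, hne,
      (hiff _ hm1).2 (Or.inl rfl), (hiff _ hm2).2 (Or.inr rfl)⟩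
  · intro x hx
    obtain ⟨hx0, hx1⟩ := hx
    have h1 : (0:ℝ) < 1 - x^2 := by nlinarith
    have hA : A15 (x:ℂ) = ((-8 / (1-x^2)^2 : ℝ) : ℂ) := by
      rw [A15]; push_cast; ring
    rw [hA, Complex.norm_real, Real.norm_eq_abs, abs_div, abs_neg, _root_.abs_pow, _root_.sq_abs]
    rw [abs_of_pos (by norm_num : (0:ℝ) < 8)]
    field_simp
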